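/- Let q > 1 be a prime power and n a positive integer. The maximum over all subspaces U ⊆ F_qⁿ of the quantity |K(U)| = Σ_{i=0}^{min(u,n−u)} C(u,i)_q·C(n−u,i)_q (where u = dim U) equals Σ_{i=0}^{⌊n/2⌋} C(⌊n/2⌋, i)_q · C(⌈n/2⌉, i)_q, and the maximum is attained exactly when dim U ∈ {⌊n/2⌋, ⌈n/2⌉}. -/

import Mathlib

def gaussBinom (q : ℕ) : ℕ → ℕ → ℕ
  | _, 0 => 1
  | 0, _ + 1 => 0
  | n + 1, k + 1 => gaussBinom q n (k + 1) + q ^ (n - k) * gaussBinom q n k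


lemma gb_zero (q n : ℕ) : gaussBinom q n 0 = 1 := by cases n <;> rfl

lemma gb_succ (q n k : ℕ) :
    gaussBinom q (n+1) (k+1) = gaussBinom q n (k+1) + q ^ (n - k) * gaussBinom q n k := rfl

lemma gb_eq_zero (q : ℕ) : ∀ {n k : ℕ}, n < k → gaussBinom q n k = 0 := by
  intro n
  induction n with
  | zero => intro k h; cases k with
    | zero => omega
    | succ k => rfl
  | succ n ih =>
    intro k h
    cases k with
    | zero => omega
    | succ k =>
      rw [gb_succ, ih (by omega), ih (by omega)]
      simp

lemma gb_self (q : ℕ) : ∀ n, gaussBinom q n n = 1 := by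
  intro n
  induction n with
  | zero => rfl
  | succ n ih => rw [gb_succ, ih, gb_eq_zero q (by omega)]; simp

lemma gb_pos (q : ℕ) (hq : 0 < q) : ∀ {n k : ℕ}, k ≤ n → 0 < gaussBinom q n k := by
  intro n
  induction n with
  | zero => intro k h; interval_cases k; simp [gb_zero]
  | succ n ih =>
    intro k h
    cases k with
    | zero => simp [gb_zero]
    | succ k =>
      rw [gb_succ]
      have := ih (show k ≤ n by omega)
      positivity

def gf (q m : ℕ) : ℕ := ∏ i ∈ Finset.range m, (q ^ (i+1) - 1)

lemma gf_succ (q m : ℕ) : gf q (m+1) = gf q m * (q ^ (m+1) - 1) := Finset.prod_range_succ _ _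

lemma gf_pos {q : ℕ} (hq : 1 < q) (m : ℕ) : 0 < gf q m := by
  apply Finset.prod_pos
  intro i _
  have : 2 ≤ q ^ (i+1) := le_trans hq (Nat.le_self_pow (by omega) q)
  omega

lemma gb_mul_gf {q : ℕ} (hq : 1 < q) : ∀ n k, k ≤ n →
    gaussBinom q n k * (gf q k * gf q (n - k)) = gf q n := by
  intro n
  induction n with
  | zero => intro k h; interval_cases k; simp [gb_zero, gf]
  | succ n ih =>
    intro k h
    cases k with
    | zero => simp [gb_zero, gf]
    | succ k =>
      rcases Nat.lt_or_ge k n with hk | hk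
      · -- k+1 ≤ n
        have h1 : gaussBinom q n (k+1) * (gf q (k+1) * gf q (n - (k+1))) = gf q n :=
          ih (k+1) (by omega)
        have h2 : gaussBinom q n k * (gf q k * gf q (n - k)) = gf q n := ih k (by omega)
        have e0 : n + 1 - (k+1) = n - k := by omega
        have e2' : gf q (n - k) = gf q (n - (k+1)) * (q ^ (n-k) - 1) := by
          have e2 : n - k = (n - (k+1)) + 1 := by omega
          rw [e2, gf_succ, ← e2]
        have key : (q ^ (n - k) - 1) + q ^ (n-k) * (q^(k+1) - 1) = q ^ (n+1) - 1 := by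
          have hA : 1 ≤ q ^ (k+1) := Nat.one_le_pow _ _ (by omega)
          have hB : 1 ≤ q ^ (n-k) := Nat.one_le_pow _ _ (by omega)
          have hAB : q ^ (n - k) * q ^ (k+1) = q ^ (n+1) := by
            rw [← pow_add]; congr 1; omega
          have hC : q ^ (n - k) * (q ^ (k+1) - 1) = q ^ (n-k) * q ^ (k+1) - q ^ (n-k) := by
            rw [Nat.mul_sub, mul_one]
          have hle : q ^ (n-k) ≤ q ^ (n+1) := Nat.pow_le_pow_right (by omega) (by omega)
          rw [hC, hAB]
          omega
        rw [gb_succ, add_mul, e0]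
        have t1 : gaussBinom q n (k+1) * (gf q (k+1) * gf q (n-k))
            = gf q n * (q ^ (n-k) - 1) := by
          rw [e2', ← h1]; ring
        have t2 : q ^ (n-k) * gaussBinom q n k * (gf q (k+1) * gf q (n-k))
            = gf q n * (q ^ (n-k) * (q ^ (k+1) - 1)) := by
          rw [gf_succ q k, ← h2]; ring
        rw [t1, t2, ← Nat.mul_add, key, ← gf_succ]
      · -- k = n
        have hk' : k = n := by omega
        rw [hk']
        have h0 : n + 1 - (n + 1) = 0 := Nat.sub_self _
        rw [gb_self, h0, one_mul]
        have : gf q 0 = 1 := rfl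
        rw [this, mul_one]



lemma gb_corr' {q : ℕ} (hq : 1 < q) {a c : ℕ} (hac : a ≤ c) (j : ℕ) :
    q ^ (c - a) * (gaussBinom q a (j+1) * gaussBinom q c j)
      ≤ gaussBinom q a j * gaussBinom q c (j+1) := by
  rcases Nat.lt_or_ge a (j+1) with h | h
  · rw [gb_eq_zero q h]; simp
  · have hja : j + 1 ≤ a := h
    have hs : q ^ (c-a) * (q ^ (a-j) - 1) ≤ q ^ (c-j) - 1 := by
      have hp : q ^ (c-a) * q ^ (a-j) = q ^ (c-j) := by
        rw [← pow_add]; congr 1; omega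
      have h1 : 1 ≤ q ^ (c-a) := Nat.one_le_pow _ _ (by omega)
      rw [Nat.mul_sub, mul_one, hp]
      omega
    have ea : a - j = (a - (j+1)) + 1 := by omega
    have ec : c - j = (c - (j+1)) + 1 := by omega
    have ga : gf q (a-j) = gf q (a-(j+1)) * (q ^ (a-j) - 1) := by
      rw [ea, gf_succ, ← ea]
    have gc : gf q (c-j) = gf q (c-(j+1)) * (q ^ (c-j) - 1) := by
      rw [ec, gf_succ, ← ec]
    have hD : q ^ (c-a) * ((gf q j * gf q (a-j)) * (gf q (j+1) * gf q (c-(j+1))))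
        ≤ (gf q (j+1) * gf q (a-(j+1))) * (gf q j * gf q (c-j)) := by
      rw [ga, gc]
      calc q ^ (c-a) * ((gf q j * (gf q (a-(j+1)) * (q ^ (a-j) - 1))) *
              (gf q (j+1) * gf q (c-(j+1))))
          = (gf q j * gf q (a-(j+1)) * gf q (j+1) * gf q (c-(j+1))) *
              (q ^ (c-a) * (q ^ (a-j) - 1)) := by ring
        _ ≤ (gf q j * gf q (a-(j+1)) * gf q (j+1) * gf q (c-(j+1))) * (q ^ (c-j) - 1) :=
            Nat.mul_le_mul_left _ hs
        _ = (gf q (j+1) * gf q (a-(j+1))) * (gf q j * (gf q (c-(j+1)) * (q ^ (c-j) - 1))) := by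
            ring
    have hXL : (gaussBinom q a (j+1) * gaussBinom q c j) *
        ((gf q (j+1) * gf q (a-(j+1))) * (gf q j * gf q (c-j))) = gf q a * gf q c := by
      have i1 := gb_mul_gf hq a (j+1) h
      have i2 := gb_mul_gf hq c j (by omega)
      rw [← i1, ← i2]; ring
    have hYR : (gaussBinom q a j * gaussBinom q c (j+1)) *
        ((gf q j * gf q (a-j)) * (gf q (j+1) * gf q (c-(j+1)))) = gf q a * gf q c := by
      have i1 := gb_mul_gf hq a j (by omega)
      have i2 := gb_mul_gf hq c (j+1) (by omega)
      rw [← i1, ← i2]; ring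
    have hDLpos : 0 < (gf q (j+1) * gf q (a-(j+1))) * (gf q j * gf q (c-j)) := by
      exact Nat.mul_pos (Nat.mul_pos (gf_pos hq _) (gf_pos hq _))
        (Nat.mul_pos (gf_pos hq _) (gf_pos hq _))
    apply Nat.le_of_mul_le_mul_right _ hDLpos
    calc (q ^ (c-a) * (gaussBinom q a (j+1) * gaussBinom q c j)) *
            ((gf q (j+1) * gf q (a-(j+1))) * (gf q j * gf q (c-j)))
        = q ^ (c-a) * ((gaussBinom q a (j+1) * gaussBinom q c j) *
            ((gf q (j+1) * gf q (a-(j+1))) * (gf q j * gf q (c-j)))) := by ring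
      _ = q ^ (c-a) * ((gaussBinom q a j * gaussBinom q c (j+1)) *
            ((gf q j * gf q (a-j)) * (gf q (j+1) * gf q (c-(j+1))))) := by rw [hXL, hYR]
      _ = (gaussBinom q a j * gaussBinom q c (j+1)) *
            (q ^ (c-a) * ((gf q j * gf q (a-j)) * (gf q (j+1) * gf q (c-(j+1))))) := by ring
      _ ≤ (gaussBinom q a j * gaussBinom q c (j+1)) *
            ((gf q (j+1) * gf q (a-(j+1))) * (gf q j * gf q (c-j))) :=
          Nat.mul_le_mul_left _ hD



lemma Hs_lt {q : ℕ} (hq : 1 < q) {n a : ℕ} (h : 2*a+2 ≤ n) :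
    ∑ i ∈ Finset.range (n+1), gaussBinom q a i * gaussBinom q (n-a) i
      < ∑ i ∈ Finset.range (n+1), gaussBinom q (a+1) i * gaussBinom q (n-(a+1)) i := by
  set c := n - (a+1) with hc
  have hc1 : n - a = c + 1 := by omega
  have hac : a + 1 ≤ c := by omega
  apply Finset.sum_lt_sum
  · intro i _
    cases i with
    | zero => simp [gb_zero]
    | succ j =>
      rw [hc1, gb_succ, gb_succ, mul_add, add_mul]
      apply Nat.add_le_add_left
      rcases Nat.lt_or_ge a j with haj | haj
      · rw [gb_eq_zero q (show a < j+1 by omega)]; simp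
      · have hpw : q ^ (c-j) = q ^ (a-j) * q ^ (c-a) := by
          rw [← pow_add]; congr 1; omega
        calc gaussBinom q a (j+1) * (q ^ (c-j) * gaussBinom q c j)
            = q ^ (a-j) * (q ^ (c-a) * (gaussBinom q a (j+1) * gaussBinom q c j)) := by
              rw [hpw]; ring
          _ ≤ q ^ (a-j) * (gaussBinom q a j * gaussBinom q c (j+1)) :=
              Nat.mul_le_mul_left _ (gb_corr' hq (by omega) j)
          _ = q ^ (a-j) * gaussBinom q a j * gaussBinom q c (j+1) := by ring
  · refine ⟨a+1, Finset.mem_range.mpr (by omega), ?_⟩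
    rw [gb_eq_zero q (show a < a+1 by omega), gb_self]
    simp only [zero_mul, one_mul]
    exact gb_pos q (by omega) (show a+1 ≤ n-(a+1) by omega)

lemma Hs_strict {q : ℕ} (hq : 1 < q) {n a b : ℕ} (hab : a < b) (hb : 2*b ≤ n) :
    ∑ i ∈ Finset.range (n+1), gaussBinom q a i * gaussBinom q (n-a) i
      < ∑ i ∈ Finset.range (n+1), gaussBinom q b i * gaussBinom q (n-b) i := by
  induction b with
  | zero => omega
  | succ b ih =>
    rcases Nat.lt_or_ge a b with h' | h'
    · exact lt_trans (ih h' (by omega)) (Hs_lt hq (by omega))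
    · have : a = b := by omega
      subst this
      exact Hs_lt hq (by omega)

lemma Hs_symm (q : ℕ) {n u : ℕ} (hu : u ≤ n) :
    ∑ i ∈ Finset.range (n+1), gaussBinom q u i * gaussBinom q (n-u) i
      = ∑ i ∈ Finset.range (n+1), gaussBinom q (n-u) i * gaussBinom q (n-(n-u)) i := by
  apply Finset.sum_congr rfl
  intro i _
  have : n - (n - u) = u := by omega
  rw [this, mul_comm]

/-- extend the truncated sum to range (n+1) -/
lemma Hs_ext (q : ℕ) {n u : ℕ} (hu : u ≤ n) :
    ∑ i ∈ Finset.range (min u (n-u) + 1), gaussBinom q u i * gaussBinom q (n-u) i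
      = ∑ i ∈ Finset.range (n+1), gaussBinom q u i * gaussBinom q (n-u) i := by
  apply Finset.sum_subset
  · apply Finset.range_subset_range.mpr; omega
  · intro i _ hi
    rw [Finset.mem_range] at hi
    push_neg at hi
    rcases Nat.lt_or_ge u (n-u) with h | h
    · rw [gb_eq_zero q (show u < i by omega)]; simp
    · rw [gb_eq_zero q (show n-u < i by omega)]; simp



lemma Hs_le_half {q : ℕ} (hq : 1 < q) {n w : ℕ} (hw : w ≤ n/2) :
    (∑ i ∈ Finset.range (n+1), gaussBinom q w i * gaussBinom q (n-w) i
      ≤ ∑ i ∈ Finset.range (n+1), gaussBinom q (n/2) i * gaussBinom q (n-n/2) i) ∧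
    ((∑ i ∈ Finset.range (n+1), gaussBinom q w i * gaussBinom q (n-w) i
      = ∑ i ∈ Finset.range (n+1), gaussBinom q (n/2) i * gaussBinom q (n-n/2) i) ↔ w = n/2) := by
  rcases Nat.lt_or_ge w (n/2) with h | h
  · have hlt := Hs_strict hq h (show 2*(n/2) ≤ n by omega)
    refine ⟨le_of_lt hlt, ?_, ?_⟩
    · intro he; exact absurd he (ne_of_lt hlt)
    · intro he; omega
  · have : w = n/2 := by omega
    subst this
    exact ⟨le_rfl, by simp⟩

lemma Hs_max {q : ℕ} (hq : 1 < q) {n u : ℕ} (hu : u ≤ n) :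
    (∑ i ∈ Finset.range (n+1), gaussBinom q u i * gaussBinom q (n-u) i
      ≤ ∑ i ∈ Finset.range (n+1), gaussBinom q (n/2) i * gaussBinom q (n-n/2) i) ∧
    ((∑ i ∈ Finset.range (n+1), gaussBinom q u i * gaussBinom q (n-u) i
      = ∑ i ∈ Finset.range (n+1), gaussBinom q (n/2) i * gaussBinom q (n-n/2) i) ↔
      (u = n/2 ∨ u = (n+1)/2)) := by
  rcases le_or_gt u (n/2) with h | h
  · obtain ⟨h1, h2⟩ := Hs_le_half hq h
    refine ⟨h1, h2.trans ?_⟩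
    constructor
    · intro h3; left; exact h3
    · rintro (h3 | h3) <;> omega
  · have hnu : n - u ≤ n/2 := by omega
    have hsym := Hs_symm q hu
    obtain ⟨h1, h2⟩ := Hs_le_half hq hnu
    rw [hsym]
    refine ⟨h1, h2.trans ?_⟩
    constructor
    · intro h3; right; omega
    · rintro (h3 | h3) <;> omega


theorem stmt_12 (q n : ℕ) (hq : 1 < q) (hn : 1 ≤ n)
    (F : Type*) [Field F] [Fintype F] (hF : Fintype.card F = q) :
    (∀ U : Submodule F (Fin n → F),
      (∑ i ∈ Finset.range (min (Module.finrank F U) (n - Module.finrank F U) + 1),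
          gaussBinom q (Module.finrank F U) i *
            gaussBinom q (n - Module.finrank F U) i) ≤
        ∑ i ∈ Finset.range (n / 2 + 1),
          gaussBinom q (n / 2) i * gaussBinom q ((n + 1) / 2) i ∧
      ((∑ i ∈ Finset.range (min (Module.finrank F U) (n - Module.finrank F U) + 1),
          gaussBinom q (Module.finrank F U) i *
            gaussBinom q (n - Module.finrank F U) i) =
        (∑ i ∈ Finset.range (n / 2 + 1),
          gaussBinom q (n / 2) i * gaussBinom q ((n + 1) / 2) i) ↔
        (Module.finrank F U = n / 2 ∨ Module.finrank F U = (n + 1) / 2))) ∧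
    ∃ U : Submodule F (Fin n → F),
      (∑ i ∈ Finset.range (min (Module.finrank F U) (n - Module.finrank F U) + 1),
          gaussBinom q (Module.finrank F U) i *
            gaussBinom q (n - Module.finrank F U) i) =
        ∑ i ∈ Finset.range (n / 2 + 1),
          gaussBinom q (n / 2) i * gaussBinom q ((n + 1) / 2) i := by
  have hhalf : (n + 1) / 2 = n - n / 2 := by omega
  have hm : min (n / 2) (n - n / 2) = n / 2 := by omega
  have keyR : (∑ i ∈ Finset.range (n / 2 + 1),
      gaussBinom q (n / 2) i * gaussBinom q ((n + 1) / 2) i)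
      = ∑ i ∈ Finset.range (n + 1),
          gaussBinom q (n / 2) i * gaussBinom q (n - n / 2) i := by
    rw [hhalf, show n / 2 + 1 = min (n / 2) (n - n / 2) + 1 by omega]
    exact Hs_ext q (by omega)
  constructor
  · intro U
    set u := Module.finrank F ↥U with hu_def
    have hu : u ≤ n := by
      have h1 := Submodule.finrank_le U
      rwa [Module.finrank_fin_fun] at h1
    rw [Hs_ext q hu, keyR]
    exact Hs_max hq hu
  · let v : Fin (n / 2) → (Fin n → F) :=
      (Pi.basisFun F (Fin n)) ∘ Fin.castLE (by omega : n / 2 ≤ n)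
    have hv : LinearIndependent F v :=
      (Pi.basisFun F (Fin n)).linearIndependent.comp _ (Fin.castLE_injective _)
    refine ⟨Submodule.span F (Set.range v), ?_⟩
    have hrank : Module.finrank F ↥(Submodule.span F (Set.range v)) = n / 2 := by
      rw [finrank_span_eq_card hv, Fintype.card_fin]
    rw [hrank, hm, hhalf]
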